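/- Let h > 0, μ > 0, φ ∈ ℝ and set ε = μh²/4. Let θ : ℤ → ℝ satisfy sin((θₙ₊₁ − 2θₙ + θₙ₋₁)/4) + ε sin((θₙ₊₁ + 2θₙ + θₙ₋₁)/4 − φ) = 0 for all n ∈ ℤ. Let Λ = cos((θₙ₊₁ − θₙ)/2) + ε cos((θₙ₊₁ + θₙ)/2 − φ) (independent of n), and assume Λ ≠ 0 and cos((θₙ₊₁ − θₙ₋₁)/4) ≠ 0 for all n. Set Θₙ = (θₙ₊₁ + θₙ)/2, κₙ = (2/h) tan((θₙ₊₁ − θₙ₋₁)/4), let γ : ℤ → ℝ² satisfy γₙ₊₁ = γₙ + h·(cos Θₙ, sin Θₙ), and define uₙ = ⟨(sin φ, −cos φ), γₙ⟩. Then there exists a constant A ∈ ℝ such that κₙ = (μ/Λ) uₙ + A for all n ∈ ℤ. -/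

import Mathlib

lemma elastica_key (b x y p e L S T A B : ℝ)
    (hS : S = p + b + x) (hT : T = p - b + y)
    (hA : A = b + x) (hB : B = b - y)
    (hx : Real.sin x + e * Real.sin S = 0)
    (hy : Real.sin y + e * Real.sin T = 0)
    (hL : Real.cos b + e * Real.cos p = L) :
    L * (Real.sin A * Real.cos B - Real.cos A * Real.sin B)
      = -(2 * e) * Real.sin p * (Real.cos A * Real.cos B) := by
  subst hS hT hA hB hL
  simp only [Real.sin_add, Real.cos_add, Real.sin_sub, Real.cos_sub] at hx hy ⊢
  linear_combination (Real.cos b * Real.cos y + Real.sin b * Real.sin y) * hx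
    + (Real.cos b * Real.cos x - Real.sin b * Real.sin x) * hy
    + (Real.cos b * (Real.cos x * Real.sin y + Real.sin x * Real.cos y)) * (Real.sin_sq_add_cos_sq b)

/-- For a general discrete elastica segment, the discrete curvature is an
affine function of the projection `uₙ = ⟨(sin φ, −cos φ), γₙ⟩`: `κₙ = (μ/Λ) uₙ + A`. -/
theorem discrete_elastica_curvature_affine (h μ φ : ℝ) (hh : 0 < h) (hμ : 0 < μ)
    (ε : ℝ) (hε : ε = μ * h ^ 2 / 4)
    (θ : ℤ → ℝ)
    (hpend : ∀ n : ℤ,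
      Real.sin ((θ (n + 1) - 2 * θ n + θ (n - 1)) / 4)
        + ε * Real.sin ((θ (n + 1) + 2 * θ n + θ (n - 1)) / 4 - φ) = 0)
    (Λ : ℝ)
    (hΛ : ∀ n : ℤ,
      Real.cos ((θ (n + 1) - θ n) / 2)
        + ε * Real.cos ((θ (n + 1) + θ n) / 2 - φ) = Λ)
    (hΛ0 : Λ ≠ 0)
    (hcos : ∀ n : ℤ, Real.cos ((θ (n + 1) - θ (n - 1)) / 4) ≠ 0)
    (Θ : ℤ → ℝ) (hΘ : ∀ n : ℤ, Θ n = (θ (n + 1) + θ n) / 2)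
    (κ : ℤ → ℝ) (hκ : ∀ n : ℤ, κ n = 2 / h * Real.tan ((θ (n + 1) - θ (n - 1)) / 4))
    (γ : ℤ → ℝ × ℝ)
    (hγ : ∀ n : ℤ, γ (n + 1) = γ n + h • ((Real.cos (Θ n), Real.sin (Θ n)) : ℝ × ℝ))
    (u : ℤ → ℝ) (hu : ∀ n : ℤ, u n = Real.sin φ * (γ n).1 - Real.cos φ * (γ n).2) :
    ∃ A : ℝ, ∀ n : ℤ, κ n = μ / Λ * u n + A := by
  have hne : h ≠ 0 := ne_of_gt hh
  -- one-step invariance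
  have step : ∀ n : ℤ, κ (n + 1) - μ / Λ * u (n + 1) = κ n - μ / Λ * u n := by
    intro n
    have hp1 := hpend n
    have hp2 := hpend (n + 1)
    rw [show n + 1 + 1 = n + 2 by ring, show n + 1 - 1 = n by ring] at hp2
    have hL := hΛ n
    have hc1 := hcos n
    have hc2 := hcos (n + 1)
    rw [show n + 1 + 1 = n + 2 by ring, show n + 1 - 1 = n by ring] at hc2
    have hκ1 := hκ n
    have hκ2 := hκ (n + 1)
    rw [show n + 1 + 1 = n + 2 by ring, show n + 1 - 1 = n by ring] at hκ2
    -- projection step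
    have hu2 : u (n + 1) = u n
        + h * (Real.sin φ * Real.cos (Θ n) - Real.cos φ * Real.sin (Θ n)) := by
      rw [hu, hu, hγ n]
      simp [Prod.smul_def, smul_eq_mul]
      ring
    -- the key trig identity
    have key := elastica_key ((θ (n + 1) - θ n) / 2)
      ((θ (n + 2) - 2 * θ (n + 1) + θ n) / 4)
      ((θ (n + 1) - 2 * θ n + θ (n - 1)) / 4)
      ((θ (n + 1) + θ n) / 2 - φ) ε Λ
      ((θ (n + 2) + 2 * θ (n + 1) + θ n) / 4 - φ)
      ((θ (n + 1) + 2 * θ n + θ (n - 1)) / 4 - φ)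
      ((θ (n + 2) - θ n) / 4)
      ((θ (n + 1) - θ (n - 1)) / 4)
      (by ring) (by ring) (by ring) (by ring) hp2 hp1 hL
    have hsinp : Real.sin ((θ (n + 1) + θ n) / 2 - φ)
        = Real.sin (Θ n) * Real.cos φ - Real.cos (Θ n) * Real.sin φ := by
      rw [hΘ n, Real.sin_sub]
    rw [hκ1, hκ2, hu2, Real.tan_eq_sin_div_cos, Real.tan_eq_sin_div_cos]
    rw [hsinp] at key
    field_simp
    linear_combination 2 * key
      - 4 * (Real.sin (Θ n) * Real.cos φ - Real.cos (Θ n) * Real.sin φ)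
        * Real.cos ((θ (n + 2) - θ n) / 4) * Real.cos ((θ (n + 1) - θ (n - 1)) / 4) * hε
  refine ⟨κ 0 - μ / Λ * u 0, fun n => ?_⟩
  have main : ∀ n : ℤ, κ n - μ / Λ * u n = κ 0 - μ / Λ * u 0 := by
    intro n
    induction n using Int.induction_on with
    | zero => rfl
    | succ k ih => rw [step k, ih]
    | pred k ih =>
      have := step (-(k : ℤ) - 1)
      rw [show -(k : ℤ) - 1 + 1 = -k by ring] at this
      rw [← this]; exact ih
  have := main n
  linarith
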